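/- Let d > 1. The function a ↦ w₊(a) := (-2a²d + u₊(a) + 2a√(d²(1+a²) - d·u₊(a)))/(1 - a²), where u₊(a) = √(4a²d² + (1-a²)²), is strictly increasing on [0,1), with w₊(0) = 1; consequently w₊(a) > 1 for all 0 < a < 1. -/

import Mathlib

private lemma stmt7_key (d : ℝ) (hd : 1 < d) (a : ℝ) (ha0 : 0 ≤ a) (ha1 : a < 1) :
    (-2 * a ^ 2 * d + Real.sqrt (4 * a ^ 2 * d ^ 2 + (1 - a ^ 2) ^ 2) +
      2 * a * Real.sqrt (d ^ 2 * (1 + a ^ 2) -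
        d * Real.sqrt (4 * a ^ 2 * d ^ 2 + (1 - a ^ 2) ^ 2))) / (1 - a ^ 2) =
    Real.sqrt (1 + 4 * d * (d ^ 2 - 1) *
        (a ^ 2 / (d * (1 + a ^ 2) + Real.sqrt (4 * a ^ 2 * d ^ 2 + (1 - a ^ 2) ^ 2)))) +
    Real.sqrt (4 * d * (d ^ 2 - 1) *
        (a ^ 2 / (d * (1 + a ^ 2) + Real.sqrt (4 * a ^ 2 * d ^ 2 + (1 - a ^ 2) ^ 2)))) := by
  set U := Real.sqrt (4 * a ^ 2 * d ^ 2 + (1 - a ^ 2) ^ 2) with hUdef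
  have h1a : (0:ℝ) < 1 - a ^ 2 := by nlinarith
  have hXnn : (0:ℝ) ≤ 4 * a ^ 2 * d ^ 2 + (1 - a ^ 2) ^ 2 := by positivity
  have hU2 : U ^ 2 = 4 * a ^ 2 * d ^ 2 + (1 - a ^ 2) ^ 2 := Real.sq_sqrt hXnn
  have hUnn : 0 ≤ U := Real.sqrt_nonneg _
  have hd21 : (0:ℝ) ≤ (d ^ 2 - 1) * (1 - a ^ 2) ^ 2 :=
    mul_nonneg (by nlinarith) (sq_nonneg _)
  have hUle : U ≤ d * (1 + a ^ 2) := by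
    have h1 : 4 * a ^ 2 * d ^ 2 + (1 - a ^ 2) ^ 2 ≤ (d * (1 + a ^ 2)) ^ 2 := by nlinarith
    calc U ≤ Real.sqrt ((d * (1 + a ^ 2)) ^ 2) := Real.sqrt_le_sqrt h1
      _ = d * (1 + a ^ 2) := Real.sqrt_sq (by nlinarith)
  have hUge : 2 * a ^ 2 * d ≤ U := by
    have h1 : (2 * a ^ 2 * d) ^ 2 ≤ 4 * a ^ 2 * d ^ 2 + (1 - a ^ 2) ^ 2 := by
      nlinarith [mul_nonneg (sq_nonneg (a * d)) h1a.le, sq_nonneg (1 - a ^ 2)]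
    calc 2 * a ^ 2 * d = Real.sqrt ((2 * a ^ 2 * d) ^ 2) :=
          (Real.sqrt_sq (by nlinarith)).symm
      _ ≤ U := Real.sqrt_le_sqrt h1
  have hD : (0:ℝ) < d * (1 + a ^ 2) + U := by nlinarith
  have hKey : (d * (1 + a ^ 2) - U) * (d * (1 + a ^ 2) + U) = (d ^ 2 - 1) * (1 - a ^ 2) ^ 2 := by
    linear_combination -hU2
  have hSnn : (0:ℝ) ≤ d ^ 2 * (1 + a ^ 2) - d * U := by
    have := mul_nonneg (by linarith : (0:ℝ) ≤ d)
      (by linarith : (0:ℝ) ≤ d * (1 + a ^ 2) - U)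
    nlinarith [this]
  set W := Real.sqrt (d ^ 2 * (1 + a ^ 2) - d * U) with hWdef
  have hW2 : W ^ 2 = d ^ 2 * (1 + a ^ 2) - d * U := Real.sq_sqrt hSnn
  have hWnn : 0 ≤ W := Real.sqrt_nonneg _
  have e1 : Real.sqrt (4 * d * (d ^ 2 - 1) * (a ^ 2 / (d * (1 + a ^ 2) + U)))
      = 2 * a * W / (1 - a ^ 2) := by
    have heq : 4 * d * (d ^ 2 - 1) * (a ^ 2 / (d * (1 + a ^ 2) + U))
        = (2 * a * W / (1 - a ^ 2)) ^ 2 := by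
      field_simp
      linear_combination (-4*a^2*(d*(1+a^2)+U)) * hW2 + (-4*a^2*d) * hKey
    rw [heq, Real.sqrt_sq (by positivity)]
  have e2 : Real.sqrt (1 + 4 * d * (d ^ 2 - 1) * (a ^ 2 / (d * (1 + a ^ 2) + U)))
      = (U - 2 * a ^ 2 * d) / (1 - a ^ 2) := by
    have heq : 1 + 4 * d * (d ^ 2 - 1) * (a ^ 2 / (d * (1 + a ^ 2) + U))
        = ((U - 2 * a ^ 2 * d) / (1 - a ^ 2)) ^ 2 := by
      field_simp
      linear_combination (-(d*(1+a^2)+U)) * hU2 + (-4*a^2*d) * hKey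
    rw [heq, Real.sqrt_sq (div_nonneg (by linarith) h1a.le)]
  rw [e1, e2]
  ring

private lemma stmt7_hmono (d : ℝ) (hd : 1 < d) (a b : ℝ) (ha0 : 0 ≤ a) (hb1 : b < 1)
    (hab : a < b) :
    a ^ 2 / (d * (1 + a ^ 2) + Real.sqrt (4 * a ^ 2 * d ^ 2 + (1 - a ^ 2) ^ 2)) <
    b ^ 2 / (d * (1 + b ^ 2) + Real.sqrt (4 * b ^ 2 * d ^ 2 + (1 - b ^ 2) ^ 2)) := by
  set Ua := Real.sqrt (4 * a ^ 2 * d ^ 2 + (1 - a ^ 2) ^ 2) with hUadef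
  set Ub := Real.sqrt (4 * b ^ 2 * d ^ 2 + (1 - b ^ 2) ^ 2) with hUbdef
  have hb0 : 0 < b := lt_of_le_of_lt ha0 hab
  have hUa2 : Ua ^ 2 = 4 * a ^ 2 * d ^ 2 + (1 - a ^ 2) ^ 2 := Real.sq_sqrt (by positivity)
  have hUb2 : Ub ^ 2 = 4 * b ^ 2 * d ^ 2 + (1 - b ^ 2) ^ 2 := Real.sq_sqrt (by positivity)
  have hUann : 0 ≤ Ua := Real.sqrt_nonneg _
  have hUbnn : 0 ≤ Ub := Real.sqrt_nonneg _
  have hDa : (0:ℝ) < d * (1 + a ^ 2) + Ua := by nlinarith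
  have hDb : (0:ℝ) < d * (1 + b ^ 2) + Ub := by nlinarith
  rw [div_lt_div_iff₀ hDa hDb]
  have habsq : a ^ 2 < b ^ 2 := by nlinarith
  have h1b2 : (0:ℝ) < 1 - b ^ 2 := by nlinarith
  have hcross : a ^ 2 * Ub ≤ b ^ 2 * Ua := by
    have hsq : (a ^ 2 * Ub) ^ 2 ≤ (b ^ 2 * Ua) ^ 2 := by
      have expand : (a ^ 2 * Ub) ^ 2 = a ^ 4 * (4 * b ^ 2 * d ^ 2 + (1 - b ^ 2) ^ 2) := by
        rw [mul_pow, hUb2]; ring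
      have expand2 : (b ^ 2 * Ua) ^ 2 = b ^ 4 * (4 * a ^ 2 * d ^ 2 + (1 - a ^ 2) ^ 2) := by
        rw [mul_pow, hUa2]; ring
      rw [expand, expand2]
      have q : a ^ 2 * (1 - b ^ 2) ≤ b ^ 2 * (1 - a ^ 2) := by nlinarith
      have qnn : (0:ℝ) ≤ a ^ 2 * (1 - b ^ 2) := mul_nonneg (sq_nonneg a) h1b2.le
      have q2 := mul_self_le_mul_self qnn q
      have p1 : (0:ℝ) ≤ 4 * a ^ 2 * b ^ 2 * d ^ 2 * (b ^ 2 - a ^ 2) :=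
        mul_nonneg (by positivity) (by linarith)
      nlinarith [q2, p1]
    calc a ^ 2 * Ub = Real.sqrt ((a ^ 2 * Ub) ^ 2) :=
          (Real.sqrt_sq (mul_nonneg (sq_nonneg a) hUbnn)).symm
      _ ≤ Real.sqrt ((b ^ 2 * Ua) ^ 2) := Real.sqrt_le_sqrt hsq
      _ = b ^ 2 * Ua := Real.sqrt_sq (mul_nonneg (sq_nonneg b) hUann)
  have h3 : a ^ 2 * d < b ^ 2 * d := (mul_lt_mul_iff_left₀ (by linarith : (0:ℝ) < d)).mpr habsq
  nlinarith [hcross, h3]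

theorem stmt7 (d : ℝ) (hd : 1 < d) :
    let u : ℝ → ℝ := fun a => Real.sqrt (4 * a ^ 2 * d ^ 2 + (1 - a ^ 2) ^ 2)
    let wp : ℝ → ℝ := fun a =>
      (-2 * a ^ 2 * d + u a + 2 * a * Real.sqrt (d ^ 2 * (1 + a ^ 2) - d * u a)) / (1 - a ^ 2)
    StrictMonoOn wp (Set.Ico (0 : ℝ) 1) ∧ wp 0 = 1 ∧
    ∀ a : ℝ, 0 < a → a < 1 → 1 < wp a := by
  intro u wp
  have hwp0 : wp 0 = 1 := by
    simp only [wp, u]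
    norm_num
  have hmono : StrictMonoOn wp (Set.Ico (0 : ℝ) 1) := by
    intro a ha b hb hab
    obtain ⟨ha0, ha1⟩ := ha
    obtain ⟨hb0, hb1⟩ := hb
    have keya := stmt7_key d hd a ha0 ha1
    have keyb := stmt7_key d hd b hb0 hb1
    show wp a < wp b
    simp only [wp, u]
    rw [keya, keyb]
    have hh := stmt7_hmono d hd a b ha0 hb1 hab
    have hUann : (0:ℝ) ≤ Real.sqrt (4 * a ^ 2 * d ^ 2 + (1 - a ^ 2) ^ 2) := Real.sqrt_nonneg _
    have hDa : (0:ℝ) < d * (1 + a ^ 2) + Real.sqrt (4 * a ^ 2 * d ^ 2 + (1 - a ^ 2) ^ 2) := by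
      nlinarith
    have hK : (0:ℝ) < 4 * d * (d ^ 2 - 1) := by nlinarith
    have hha : (0:ℝ) ≤ a ^ 2 / (d * (1 + a ^ 2) +
        Real.sqrt (4 * a ^ 2 * d ^ 2 + (1 - a ^ 2) ^ 2)) :=
      div_nonneg (sq_nonneg a) hDa.le
    have h1 : 4 * d * (d ^ 2 - 1) * (a ^ 2 / (d * (1 + a ^ 2) +
          Real.sqrt (4 * a ^ 2 * d ^ 2 + (1 - a ^ 2) ^ 2))) <
        4 * d * (d ^ 2 - 1) * (b ^ 2 / (d * (1 + b ^ 2) +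
          Real.sqrt (4 * b ^ 2 * d ^ 2 + (1 - b ^ 2) ^ 2))) :=
      (mul_lt_mul_iff_right₀ hK).mpr hh
    have hnn1 : (0:ℝ) ≤ 4 * d * (d ^ 2 - 1) * (a ^ 2 / (d * (1 + a ^ 2) +
        Real.sqrt (4 * a ^ 2 * d ^ 2 + (1 - a ^ 2) ^ 2))) :=
      mul_nonneg hK.le hha
    exact add_lt_add (Real.sqrt_lt_sqrt (by linarith) (by linarith))
      (Real.sqrt_lt_sqrt hnn1 h1)
  refine ⟨hmono, hwp0, fun a ha0 ha1 => ?_⟩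
  have := hmono (Set.mem_Ico.mpr ⟨le_refl 0, by norm_num⟩)
    (Set.mem_Ico.mpr ⟨le_of_lt ha0, ha1⟩) ha0
  rw [hwp0] at this
  exact this
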